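/- Assume p m ≠ 0 for every m ∈ M. For every formula A ⊆ M and every finite set Δ of formulas with ⟦Δ⟧_am ≠ ∅: lim_{μ→1⁻} P_μ(A | Δ) = 1 if and only if ⟦S⟧ ⊆ A for every cardinality-maximal consistent subset S of Δ (i.e. A is a classical consequence of every S ∈ MCS(Δ)). -/

import Mathlib

open Classical

noncomputable section

variable {M : Type*}

/-- Likelihood of a formula (a set of models) in a model. -/
noncomputable def ell (μ : ℝ) (B : Set M) (m : M) : ℝ :=
  if m ∈ B then μ else 1 - μ

/-- Joint likelihood of a finite set of formulas in a model. -/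
noncomputable def ellS (μ : ℝ) (Δ : Finset (Set M)) (m : M) : ℝ :=
  ∏ B ∈ Δ, ell μ B m

/-- Conditional probability P_μ(A | Δ) of the generative logic model. -/
noncomputable def condP [Fintype M] (p : M → ℝ) (μ : ℝ) (A : Set M)
    (Δ : Finset (Set M)) : ℝ :=
  (∑ m, ell μ A m * ellS μ Δ m * p m) / (∑ m, ellS μ Δ m * p m)

/-- Models of a finite set of formulas. -/
def Mdl (Δ : Finset (Set M)) : Set M := {m | ∀ B ∈ Δ, m ∈ B}

/-- Possible models of a finite set of formulas. -/
def PMod (p : M → ℝ) (Δ : Finset (Set M)) : Set M :=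
  {m | (∀ B ∈ Δ, m ∈ B) ∧ p m ≠ 0}

/-- Possible models of a single formula. -/
def PModA (p : M → ℝ) (A : Set M) : Set M := {m | m ∈ A ∧ p m ≠ 0}

/-- S is a maximal consistent subset of Δ. -/
def IsMaxConsistent (Δ S : Finset (Set M)) : Prop :=
  S ⊆ Δ ∧ Mdl S ≠ ∅ ∧ ∀ B ∈ Δ \ S, Mdl (insert B S) = ∅

/-- Cardinality-maximal consistent subsets of Δ. -/
def MCS (Δ : Finset (Set M)) : Set (Finset (Set M)) :=
  {S | IsMaxConsistent Δ S ∧ ∀ S', IsMaxConsistent Δ S' → S'.card ≤ S.card}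

/-- Approximate models of Δ. -/
def AMod (Δ : Finset (Set M)) : Set M := ⋃ S ∈ MCS Δ, Mdl S

/-- S is a maximal possible subset of Δ (w.r.t. p). -/
def IsMaxPossible (p : M → ℝ) (Δ S : Finset (Set M)) : Prop :=
  S ⊆ Δ ∧ PMod p S ≠ ∅ ∧ ∀ B ∈ Δ \ S, PMod p (insert B S) = ∅

/-- Cardinality-maximal possible subsets of Δ. -/
def MPS (p : M → ℝ) (Δ : Finset (Set M)) : Set (Finset (Set M)) :=
  {S | IsMaxPossible p Δ S ∧ ∀ S', IsMaxPossible p Δ S' → S'.card ≤ S.card}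

/-- Possible approximate models of Δ. -/
def PAMod (p : M → ℝ) (Δ : Finset (Set M)) : Set M := ⋃ S ∈ MPS p Δ, PMod p S


/-! ### Auxiliary lemmas -/

def kdeg (Δ : Finset (Set M)) (m : M) : ℕ := (Δ.filter (fun B => m ∈ B)).card

lemma kdeg_le (Δ : Finset (Set M)) (m : M) : kdeg Δ m ≤ Δ.card :=
  Finset.card_filter_le _ _

lemma mem_Mdl_filter (Δ : Finset (Set M)) (m : M) :
    m ∈ Mdl (Δ.filter (fun B => m ∈ B)) :=
  fun _ hB => (Finset.mem_filter.mp hB).2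

lemma card_le_kdeg {Δ S : Finset (Set M)} {m : M} (hS : S ⊆ Δ) (hm : m ∈ Mdl S) :
    S.card ≤ kdeg Δ m :=
  Finset.card_le_card (fun B hB => Finset.mem_filter.mpr ⟨hS hB, hm B hB⟩)

lemma ellS_eq (μ : ℝ) (Δ : Finset (Set M)) (m : M) :
    ellS μ Δ m = μ ^ kdeg Δ m * (1 - μ) ^ (Δ.card - kdeg Δ m) := by
  unfold ellS
  rw [← Finset.prod_filter_mul_prod_filter_not Δ (fun B => m ∈ B)]
  have h1 : ∏ B ∈ Δ.filter (fun B => m ∈ B), ell μ B m = μ ^ kdeg Δ m :=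
    Finset.prod_eq_pow_card (fun B hB => by simp [ell, (Finset.mem_filter.mp hB).2])
  have h2 : ∏ B ∈ Δ.filter (fun B => ¬ m ∈ B), ell μ B m
      = (1 - μ) ^ (Δ.card - kdeg Δ m) := by
    rw [Finset.prod_eq_pow_card (b := 1 - μ)
      (fun B hB => by simp [ell, (Finset.mem_filter.mp hB).2])]
    congr 1
    have := Finset.card_filter_add_card_filter_not (s := Δ) (p := fun B => m ∈ B)
    unfold kdeg
    omega
  rw [h1, h2]

lemma kdeg_le_sup [Fintype M] (Δ : Finset (Set M)) (m : M) :
    kdeg Δ m ≤ Finset.univ.sup (kdeg Δ) :=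
  Finset.le_sup (Finset.mem_univ m)

lemma mcs_filter [Fintype M] {Δ : Finset (Set M)} {m : M}
    (hm : kdeg Δ m = Finset.univ.sup (kdeg Δ)) :
    Δ.filter (fun B => m ∈ B) ∈ MCS Δ := by
  have hmc : IsMaxConsistent Δ (Δ.filter (fun B => m ∈ B)) := by
    refine ⟨Finset.filter_subset _ _, ?_, ?_⟩
    · exact Set.nonempty_iff_ne_empty.mp ⟨m, mem_Mdl_filter Δ m⟩
    · intro B hB
      by_contra hne
      obtain ⟨m', hm'⟩ := Set.nonempty_iff_ne_empty.mpr hne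
      have hBn : B ∉ Δ.filter (fun B => m ∈ B) := (Finset.mem_sdiff.mp hB).2
      have hsub : insert B (Δ.filter (fun B => m ∈ B)) ⊆ Δ := by
        intro C hC
        rcases Finset.mem_insert.mp hC with rfl | hC
        · exact (Finset.mem_sdiff.mp hB).1
        · exact Finset.filter_subset _ _ hC
      have h1 := card_le_kdeg hsub hm'
      rw [Finset.card_insert_of_notMem hBn] at h1
      have h2 := kdeg_le_sup Δ m'
      have hcd : (Δ.filter (fun B => m ∈ B)).card = kdeg Δ m := rfl
      have : kdeg Δ m + 1 ≤ kdeg Δ m := by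
        calc kdeg Δ m + 1 = (Δ.filter (fun B => m ∈ B)).card + 1 := by rw [hcd]
          _ ≤ kdeg Δ m' := h1
          _ ≤ Finset.univ.sup (kdeg Δ) := h2
          _ = kdeg Δ m := hm.symm
      exact Nat.not_succ_le_self _ this
  refine ⟨hmc, fun S' hS' => ?_⟩
  obtain ⟨m', hm'⟩ := Set.nonempty_iff_ne_empty.mpr hS'.2.1
  calc S'.card ≤ kdeg Δ m' := card_le_kdeg hS'.1 hm'
    _ ≤ _ := by rw [show (Δ.filter (fun B => m ∈ B)).card = kdeg Δ m from rfl, hm]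
                exact kdeg_le_sup Δ m'

lemma amod_iff [Fintype M] [Nonempty M] {Δ : Finset (Set M)} {m : M} :
    m ∈ AMod Δ ↔ kdeg Δ m = Finset.univ.sup (kdeg Δ) := by
  constructor
  · intro hm
    obtain ⟨S, hS, hmS⟩ := Set.mem_iUnion₂.mp hm
    obtain ⟨m0, _, hm0⟩ := Finset.exists_mem_eq_sup Finset.univ Finset.univ_nonempty (kdeg Δ)
    have h1 : kdeg Δ m0 ≤ S.card := hS.2 _ (mcs_filter hm0.symm).1
    have h2 : S.card ≤ kdeg Δ m := card_le_kdeg hS.1.1 hmS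
    exact le_antisymm (kdeg_le_sup Δ m) (hm0 ▸ h1.trans h2)
  · intro hm
    exact Set.mem_iUnion₂.mpr ⟨_, mcs_filter hm, mem_Mdl_filter Δ m⟩

/-- with the model assumption, the μ → 1⁻ limit of the
conditional probability is 1 iff A is a classical consequence of every
cardinality-maximal consistent subset of Δ. -/
theorem stmt_11 [Fintype M] [Nonempty M] (p : M → ℝ)
    (hp : ∀ m, 0 ≤ p m) (hps : ∑ m, p m = 1) (hpos : ∀ m, p m ≠ 0)
    (A : Set M) (Δ : Finset (Set M)) (h : AMod Δ ≠ ∅) :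
    Filter.Tendsto (fun μ => condP p μ A Δ)
        (nhdsWithin 1 (Set.Ico (0 : ℝ) 1)) (nhds 1) ↔
      ∀ S ∈ MCS Δ, Mdl S ⊆ A := by
  classical
  set K := Finset.univ.sup (kdeg Δ) with hKdef
  have hKle : ∀ m : M, kdeg Δ m ≤ K := kdeg_le_sup Δ
  obtain ⟨m0, _, hm0⟩ := Finset.exists_mem_eq_sup Finset.univ Finset.univ_nonempty (kdeg Δ)
  have hKcard : K ≤ Δ.card := by rw [hKdef, hm0]; exact kdeg_le Δ m0
  set F : ℝ → ℝ :=
    fun μ => ∑ m, ell μ A m * (μ ^ kdeg Δ m * (1 - μ) ^ (K - kdeg Δ m)) * p m with hFdef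
  set G : ℝ → ℝ :=
    fun μ => ∑ m, (μ ^ kdeg Δ m * (1 - μ) ^ (K - kdeg Δ m)) * p m with hGdef
  -- equality of condP with F/G on [0,1)
  have heq : ∀ μ ∈ Set.Ico (0:ℝ) 1, condP p μ A Δ = F μ / G μ := by
    intro μ hμ
    have hne : (1 - μ) ^ (Δ.card - K) ≠ 0 :=
      pow_ne_zero _ (sub_ne_zero.mpr (ne_of_lt hμ.2).symm)
    have hterm : ∀ m : M, ellS μ Δ m
        = (1 - μ) ^ (Δ.card - K) * (μ ^ kdeg Δ m * (1 - μ) ^ (K - kdeg Δ m)) := by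
      intro m
      rw [ellS_eq]
      have h1 : Δ.card - kdeg Δ m = (Δ.card - K) + (K - kdeg Δ m) := by
        have := hKle m; omega
      rw [h1, pow_add]; ring
    unfold condP
    rw [show ∑ m, ell μ A m * ellS μ Δ m * p m = (1 - μ) ^ (Δ.card - K) * F μ by
        rw [hFdef, Finset.mul_sum]
        exact Finset.sum_congr rfl fun m _ => by rw [hterm m]; ring]
    rw [show ∑ m, ellS μ Δ m * p m = (1 - μ) ^ (Δ.card - K) * G μ by
        rw [hGdef, Finset.mul_sum]
        exact Finset.sum_congr rfl fun m _ => by rw [hterm m]; ring]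
    rw [mul_div_mul_left _ _ hne]
  -- continuity
  have hellc : ∀ (B : Set M) (m : M), Continuous fun μ : ℝ => ell μ B m := by
    intro B m
    by_cases hm : m ∈ B <;> simp only [ell, hm, if_true, if_false] <;> fun_prop
  have hFc : Continuous F := by
    rw [hFdef]
    exact continuous_finset_sum _ fun m _ => (((hellc A m).mul (by fun_prop)).mul continuous_const)
  have hGc : Continuous G := by
    rw [hGdef]
    exact continuous_finset_sum _ fun m _ => (by fun_prop : Continuous fun μ:ℝ => _).mul continuous_const
  -- values at 1
  set c : M → ℝ := fun m => if kdeg Δ m = K then 1 else 0 with hcdef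
  set iA : M → ℝ := fun m => if m ∈ A then 1 else 0 with hiAdef
  have e1 : ∀ m : M, (1:ℝ) ^ kdeg Δ m * (1 - 1) ^ (K - kdeg Δ m) = c m := by
    intro m
    simp only [hcdef]
    rw [one_pow, sub_self, one_mul]
    by_cases hk : kdeg Δ m = K
    · simp [hk]
    · rw [if_neg hk]
      exact zero_pow (Nat.sub_ne_zero_of_lt (lt_of_le_of_ne (hKle m) hk))
  have eell : ∀ m : M, ell 1 A m = iA m := by
    intro m
    rw [hiAdef]; unfold ell
    by_cases hm : m ∈ A <;> simp [hm]
  have hF1 : F 1 = ∑ m, iA m * (c m * p m) := by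
    rw [hFdef]
    exact Finset.sum_congr rfl fun m _ => by rw [e1 m, eell m]; ring
  have hG1 : G 1 = ∑ m, c m * p m := by
    rw [hGdef]
    exact Finset.sum_congr rfl fun m _ => by rw [e1 m]
  have hcnn : ∀ m, 0 ≤ c m * p m := by
    intro m
    apply mul_nonneg _ (hp m)
    rw [hcdef]; by_cases hk : kdeg Δ m = K <;> simp [hk]
  have hG1pos : 0 < G 1 := by
    rw [hG1]
    apply Finset.sum_pos' (fun m _ => hcnn m) ⟨m0, Finset.mem_univ m0, ?_⟩
    have : c m0 = 1 := by rw [hcdef]; simp [hm0.symm, hKdef]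
    rw [this, one_mul]
    exact lt_of_le_of_ne (hp m0) (Ne.symm (hpos m0))
  -- the limit
  have hlim : Filter.Tendsto (fun μ => condP p μ A Δ)
      (nhdsWithin 1 (Set.Ico (0:ℝ) 1)) (nhds (F 1 / G 1)) := by
    have hc : Filter.Tendsto (fun μ => F μ / G μ)
        (nhdsWithin 1 (Set.Ico (0:ℝ) 1)) (nhds (F 1 / G 1)) :=
      (((hFc.tendsto 1).div (hGc.tendsto 1) hG1pos.ne')).mono_left nhdsWithin_le_nhds
    exact hc.congr' (Filter.eventuallyEq_of_mem self_mem_nhdsWithin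
      fun μ hμ => (heq μ hμ).symm)
  haveI : (nhdsWithin (1:ℝ) (Set.Ico 0 1)).NeBot := by
    apply mem_closure_iff_nhdsWithin_neBot.mp
    rw [closure_Ico (by norm_num : (0:ℝ) ≠ 1)]
    exact ⟨by norm_num, le_refl 1⟩
  constructor
  · intro ht S hS m hm
    have hmK : kdeg Δ m = K := amod_iff.mp (Set.mem_iUnion₂.mpr ⟨S, hS, hm⟩)
    by_contra hmA
    have h1 : F 1 / G 1 = 1 := tendsto_nhds_unique hlim ht
    have hFG : F 1 = G 1 := by
      rw [div_eq_one_iff_eq hG1pos.ne'] at h1; exact h1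
    have hlt : F 1 < G 1 := by
      rw [hF1, hG1]
      apply Finset.sum_lt_sum
      · intro i _
        apply mul_le_of_le_one_left (hcnn i)
        rw [hiAdef]; by_cases hi : i ∈ A <;> simp [hi]
      · refine ⟨m, Finset.mem_univ m, ?_⟩
        have h2 : iA m = 0 := by rw [hiAdef]; simp [hmA]
        have h3 : c m = 1 := by rw [hcdef]; simp [hmK]
        rw [h2, h3, zero_mul, one_mul]
        exact lt_of_le_of_ne (hp m) (Ne.symm (hpos m))
    exact absurd hFG hlt.ne
  · intro hA
    have hFG : F 1 = G 1 := by
      rw [hF1, hG1]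
      apply Finset.sum_congr rfl
      intro m _
      by_cases hk : kdeg Δ m = K
      · have hmA : m ∈ A := by
          obtain ⟨S, hS, hm⟩ := Set.mem_iUnion₂.mp (amod_iff.mpr hk)
          exact hA S hS hm
        have h2 : iA m = 1 := by rw [hiAdef]; simp [hmA]
        rw [h2, one_mul]
      · have h3 : c m = 0 := by rw [hcdef]; simp [hk]
        rw [h3, zero_mul, mul_zero]
    have := hlim
    rw [hFG, div_self hG1pos.ne'] at this
    exact this
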